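/- Let φ be an ordered edge coloring of K_n with vertex order v_1,…,v_n and colors 1,…,k, with inherited vertex coloring φ′, and for a color t let M_t(j) be the number of i ≤ j with φ′(v_i) = t. Then φ is F_q-polychromatic (every matching covering exactly n − q vertices gets all colors) if and only if for every color t there exists j ∈ [1, n] with M_t(j) > (j + q)/2. -/

import Mathlib

open List Finset

lemma step_lemma {n k : ℕ} {φ' : Fin n → Fin k} {t : Fin k} {l' L : List (Fin n)}
    {M : Finset (Sym2 (Fin n))} {v w : Fin n}
    (hsub : ∀ x ∈ l', x ∈ L) (hvL : v ∈ L) (hwL : w ∈ L) (hvw : v < w)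
    (hvt : φ' v ≠ t) (hvl : v ∉ l') (hwl : w ∉ l')
    (h2 : ∀ e ∈ M, ∃ u u' : Fin n, u ∈ l' ∧ u' ∈ l' ∧ u < u' ∧ φ' u ≠ t ∧ e = s(u, u'))
    (h3 : ∀ e ∈ M, ∀ f ∈ M, e ≠ f → ∀ x : Fin n, x ∈ e → x ∉ f) :
    s(v, w) ∉ M ∧
    (∀ e ∈ insert s(v, w) M, ∃ u u' : Fin n, u ∈ L ∧ u' ∈ L ∧ u < u' ∧ φ' u ≠ t ∧ e = s(u, u')) ∧
    (∀ e ∈ insert s(v, w) M, ∀ f ∈ insert s(v, w) M, e ≠ f → ∀ x : Fin n, x ∈ e → x ∉ f) := by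
  have hnm : s(v, w) ∉ M := by
    intro h
    obtain ⟨u, u', hu, hu', _, _, he⟩ := h2 _ h
    rw [Sym2.eq_iff] at he
    rcases he with ⟨h1, _⟩ | ⟨_, h1⟩
    · exact hvl (by rw [h1]; exact hu)
    · exact hwl (by rw [h1]; exact hu)
  have key : ∀ g ∈ M, ∀ y : Fin n, y ∈ g → y ∈ l' := by
    intro g hg y hy
    obtain ⟨u, u', hu, hu', _, _, rfl⟩ := h2 _ hg
    rcases Sym2.mem_iff.mp hy with rfl | rfl
    · exact hu
    · exact hu'
  refine ⟨hnm, ?_, ?_⟩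
  · intro e he
    rcases Finset.mem_insert.mp he with rfl | he
    · exact ⟨v, w, hvL, hwL, hvw, hvt, rfl⟩
    · obtain ⟨u, u', hu, hu', ha, hb, hc⟩ := h2 _ he
      exact ⟨u, u', hsub _ hu, hsub _ hu', ha, hb, hc⟩
  · intro e he f hf hne x hxe hxf
    rcases Finset.mem_insert.mp he with rfl | he
    · rcases Finset.mem_insert.mp hf with rfl | hf
      · exact hne rfl
      · have hx' : x ∈ l' := key _ hf _ hxf
        rcases Sym2.mem_iff.mp hxe with rfl | rfl
        · exact hvl hx'
        · exact hwl hx'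
    · rcases Finset.mem_insert.mp hf with rfl | hf
      · have hx' : x ∈ l' := key _ he _ hxe
        rcases Sym2.mem_iff.mp hxf with rfl | rfl
        · exact hvl hx'
        · exact hwl hx'
      · exact h3 _ he _ hf hne _ hxe hxf

lemma exists_matching {n k : ℕ} (φ' : Fin n → Fin k) (t : Fin k) :
    ∀ (N : ℕ) (l : List (Fin n)) (q : ℕ), l.length ≤ N → l.Pairwise (· < ·) →
    (∀ j ≤ l.length, 2 * ((l.take j).countP (fun v => φ' v = t)) ≤ j + q) →
    Even (l.length - q) →
    ∃ M : Finset (Sym2 (Fin n)),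
      2 * M.card = l.length - q ∧
      (∀ e ∈ M, ∃ u u' : Fin n, u ∈ l ∧ u' ∈ l ∧ u < u' ∧ φ' u ≠ t ∧ e = s(u, u')) ∧
      (∀ e ∈ M, ∀ f ∈ M, e ≠ f → ∀ x : Fin n, x ∈ e → x ∉ f) := by
  intro N
  induction N with
  | zero =>
    intro l q hlen _ _ _
    refine ⟨∅, ?_, by simp, by simp⟩
    simp only [Finset.card_empty, Nat.mul_zero]
    omega
  | succ N ih =>
    intro l q hlen hsort hcnt heven
    obtain ⟨c, hc⟩ := heven
    by_cases hq : l.length ≤ q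
    · refine ⟨∅, ?_, by simp, by simp⟩
      simp only [Finset.card_empty, Nat.mul_zero]
      omega
    · push_neg at hq
      rcases l with _ | ⟨v, rest⟩
      · simp at hq
      · simp only [List.length_cons] at hq hlen hc ⊢
        have hsrest : rest.Pairwise (· < ·) := (List.pairwise_cons.mp hsort).2
        have hvlt : ∀ x ∈ rest, v < x := (List.pairwise_cons.mp hsort).1
        have hvrest : v ∉ rest := fun h => lt_irrefl v (hvlt v h)
        by_cases hv : φ' v = t
        · -- skip v
          have hq1 : 1 ≤ q := by
            have := hcnt 1 (by simp)
            simp [hv] at this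
            omega
          obtain ⟨M, h1, h2, h3⟩ := ih rest (q - 1) (by omega) hsrest
            (by
              intro j hj
              have := hcnt (j + 1) (by simp; omega)
              rw [List.take_succ_cons, List.countP_cons] at this
              simp only [hv] at this
              simp at this
              omega)
            ⟨c, by omega⟩
          refine ⟨M, by omega, ?_, h3⟩
          intro e he
          obtain ⟨u, u', hu, hu', ha, hb, hcc⟩ := h2 _ he
          exact ⟨u, u', List.mem_cons_of_mem _ hu, List.mem_cons_of_mem _ hu', ha, hb, hcc⟩
        · by_cases hex : ∀ x ∈ rest, φ' x ≠ t
          · -- all of rest avoids t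
            rcases rest with _ | ⟨u, rest'⟩
            · exfalso; simp at hq hc; omega
            · simp only [List.length_cons] at hq hlen hc ⊢
              have hsrest' : rest'.Pairwise (· < ·) := (List.pairwise_cons.mp hsrest).2
              obtain ⟨M, h1, h2, h3⟩ := ih rest' q (by omega) hsrest'
                (by
                  intro j hj
                  have hz : (rest'.take j).countP (fun v => φ' v = t) = 0 := by
                    rw [List.countP_eq_zero]
                    intro x hx
                    have hx' : x ∈ rest' := List.mem_of_mem_take hx
                    simpa using hex x (List.mem_cons_of_mem _ hx')
                  omega)
                ⟨c - 1, by omega⟩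
              have hvu : v < u := hvlt u List.mem_cons_self
              have hurest' : u ∉ rest' := fun h => lt_irrefl u ((List.pairwise_cons.mp hsrest).1 u h)
              have hvrest' : v ∉ rest' := fun h => hvrest (List.mem_cons_of_mem _ h)
              obtain ⟨hnm, hmem, hdisj⟩ := step_lemma (L := v :: u :: rest')
                (fun x hx => List.mem_cons_of_mem _ (List.mem_cons_of_mem _ hx))
                List.mem_cons_self (List.mem_cons_of_mem _ List.mem_cons_self)
                hvu hv hvrest' hurest' h2 h3
              refine ⟨insert s(v, u) M, ?_, hmem, hdisj⟩
              rw [Finset.card_insert_of_notMem hnm]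
              omega
          · -- there is a t-vertex in rest
            push_neg at hex
            set p : Fin n → Bool := fun x => decide (φ' x ≠ t) with hp
            have hane : rest.dropWhile p ≠ [] := by
              intro h
              rw [List.dropWhile_eq_nil_iff] at h
              obtain ⟨x, hx, hxt⟩ := hex
              have := h x hx
              simp [hp] at this
              exact this hxt
            obtain ⟨w, b, hwb⟩ := List.exists_cons_of_ne_nil hane
            set a := rest.takeWhile p with ha
            have hw : φ' w = t := by
              have h7 := List.head_dropWhile_not p hane
              have h9 : some ((rest.dropWhile p).head hane) = some w := by
                rw [← List.head?_eq_head hane, hwb]; rfl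
              rw [Option.some_inj] at h9
              rw [h9] at h7
              simpa [hp] using h7
            have hrest : a ++ w :: b = rest := by
              rw [ha, ← hwb]; exact List.takeWhile_append_dropWhile
            have hant : ∀ x ∈ a, φ' x ≠ t := by
              intro x hx
              have := List.mem_takeWhile_imp (ha ▸ hx)
              simpa [hp] using this
            have hrnodup : (a ++ w :: b).Nodup := by
              rw [hrest]
              exact hsrest.imp (fun h => ne_of_lt h)
            rw [List.nodup_append] at hrnodup
            obtain ⟨-, hwbnd, hdisjab⟩ := hrnodup
            have hwa : w ∉ a := fun h => hdisjab w h w List.mem_cons_self rfl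
            have hwb' : w ∉ b := (List.nodup_cons.mp hwbnd).1
            have hlen2 : rest.length = a.length + b.length + 1 := by
              rw [← hrest]; simp; try omega
            have hsubab : (a ++ b).Sublist rest := by
              rw [← hrest]
              exact List.Sublist.append_left (List.sublist_cons_self w b) a
            have ha0 : ∀ m : ℕ, (a.take m).countP (fun v => φ' v = t) = 0 := by
              intro m
              rw [List.countP_eq_zero]
              intro x hx
              simpa using hant x (List.mem_of_mem_take hx)
            obtain ⟨M, h1, h2, h3⟩ := ih (a ++ b) q
              (by simp only [List.length_append]; omega)
              (List.Pairwise.sublist hsubab hsrest)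
              (by
                intro j hj
                simp only [List.length_append] at hj
                rw [List.take_append, List.countP_append, ha0]
                by_cases hja : j ≤ a.length
                · have h0 : j - a.length = 0 := by omega
                  rw [h0]
                  simp
                · push_neg at hja
                  have h5 : rest.take (j + 1) = a ++ w :: b.take (j - a.length) := by
                    rw [← hrest, List.take_append,
                      List.take_of_length_le (by omega : a.length ≤ j + 1)]
                    congr 1
                    have h6 : j + 1 - a.length = (j - a.length) + 1 := by omega
                    rw [h6, List.take_succ_cons]
                  have hkey := hcnt (j + 2) (by simp only [List.length_cons]; omega)
                  rw [show j + 2 = (j + 1) + 1 from rfl, List.take_succ_cons, h5,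
                    List.countP_cons, List.countP_append, List.countP_cons] at hkey
                  have ha0' := ha0 a.length
                  rw [List.take_of_length_le le_rfl] at ha0'
                  simp only [ha0', hv, hw] at hkey
                  simp at hkey
                  omega)
              ⟨c - 1, by simp only [List.length_append]; omega⟩
            have hvw : v < w := hvlt w (by rw [← hrest]; simp)
            have hvab : v ∉ a ++ b := fun h => hvrest (hsubab.subset h)
            have hwab : w ∉ a ++ b := by
              intro h
              rcases List.mem_append.mp h with h | h
              · exact hwa h
              · exact hwb' h
            obtain ⟨hnm, hmem, hdisj⟩ := step_lemma (L := v :: rest)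
              (fun x hx => List.mem_cons_of_mem _ (hsubab.subset hx))
              List.mem_cons_self
              (List.mem_cons_of_mem _ (by rw [← hrest]; simp))
              hvw hv hvab hwab h2 h3
            refine ⟨insert s(v, w) M, ?_, hmem, hdisj⟩
            rw [Finset.card_insert_of_notMem hnm]
            simp only [List.length_append] at h1
            omega


open List Finset

lemma count_take_aux {n k : ℕ} (φ' : Fin n → Fin k) (t : Fin k) (j : ℕ) :
    ((List.finRange n).take j).countP (fun v => φ' v = t) =
      (Finset.univ.filter (fun i : Fin n => i.val < j ∧ φ' i = t)).card := by
  classical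
  have hmem : ∀ x : Fin n, x ∈ (List.finRange n).take j ↔ x.val < j := by
    intro x
    constructor
    · intro hx
      obtain ⟨i, hi, hx⟩ := List.mem_iff_getElem.mp hx
      rw [List.getElem_take, List.getElem_finRange] at hx
      have hxi : x.val = i := by rw [← hx]; rfl
      simp [List.length_take] at hi
      omega
    · intro hx
      apply List.mem_iff_getElem.mpr
      refine ⟨x.val, ?_, ?_⟩
      · simp [List.length_take]
        have := x.isLt
        omega
      · rw [List.getElem_take, List.getElem_finRange]
        apply Fin.ext
        rfl
  have hnd : ((List.finRange n).take j).Nodup :=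
    (List.nodup_finRange n).sublist (List.take_sublist j _)
  rw [List.countP_eq_length_filter,
    ← List.toFinset_card_of_nodup (hnd.filter _), List.toFinset_filter]
  congr 1
  ext x
  simp only [Finset.mem_filter, List.mem_toFinset, Finset.mem_univ, true_and, decide_eq_true_eq]
  rw [hmem x]

lemma card_lt_filter {n : ℕ} (j : ℕ) (hj : j ≤ n) :
    (Finset.univ.filter (fun i : Fin n => i.val < j)).card = j := by
  rcases eq_or_lt_of_le hj with rfl | hj
  · have h : (Finset.univ.filter (fun i : Fin j => i.val < j)) = Finset.univ := by
      ext x; simp [x.isLt]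
    rw [h, Finset.card_univ, Fintype.card_fin]
  · have h : (Finset.univ.filter (fun i : Fin n => i.val < j)) = Finset.Iio ⟨j, hj⟩ := by
      ext x; simp [Finset.mem_Iio, Fin.lt_def]
    rw [h, Fin.card_Iio]

/-- For an ordered edge coloring `φ` of `K_n` with inherited vertex coloring `φ'`:
`φ` is `F_q`-polychromatic iff for every color `t` there is a `j ∈ [1, n]` with
`M_t(j) > (j + q)/2` (stated as `2 * M_t(j) > j + q`). -/
theorem stmt_8 (n q k : ℕ) (hk : 1 ≤ k) (hpos : 0 < n - q) (heven : Even (n - q))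
    (φ : Sym2 (Fin n) → Fin k) (φ' : Fin n → Fin k)
    (hord : ∀ i j : Fin n, i < j → φ s(i, j) = φ' i)
    (hlast : ∀ h : 2 ≤ n, φ' ⟨n - 1, by omega⟩ = φ' ⟨n - 2, by omega⟩) :
    ((∀ M : Finset (Sym2 (Fin n)),
        (∀ e ∈ M, ¬ e.IsDiag) →
        (∀ e ∈ M, ∀ f ∈ M, e ≠ f → ∀ v : Fin n, v ∈ e → v ∉ f) →
        2 * M.card = n - q →
        ∀ t : Fin k, ∃ e ∈ M, φ e = t) ↔
      (∀ t : Fin k, ∃ j : ℕ, 1 ≤ j ∧ j ≤ n ∧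
        j + q < 2 * (Finset.univ.filter (fun i : Fin n => i.val < j ∧ φ' i = t)).card)) := by
  classical
  constructor
  · -- polychromatic → counting condition
    intro hpoly t
    by_contra hcon
    push_neg at hcon
    obtain ⟨M, h1, h2, h3⟩ := exists_matching φ' t n (List.finRange n) q
      (by simp) (List.pairwise_lt_finRange n)
      (by
        intro j hj
        rw [count_take_aux]
        rcases Nat.eq_zero_or_pos j with rfl | hj1
        · have h0 : (Finset.univ.filter (fun i : Fin n => i.val < 0 ∧ φ' i = t)) = ∅ := by
            ext x; simp
          rw [h0]; simp
        · exact hcon j hj1 (by simpa using hj))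
      (by simpa using heven)
    have hcard : 2 * M.card = n - q := by simpa using h1
    have hdiag : ∀ e ∈ M, ¬ e.IsDiag := by
      intro e he
      obtain ⟨u, u', _, _, hlt, _, rfl⟩ := h2 e he
      rw [Sym2.mk_isDiag_iff]
      exact ne_of_lt hlt
    obtain ⟨e, he, het⟩ := hpoly M hdiag h3 hcard t
    obtain ⟨u, u', _, _, hlt, hut, rfl⟩ := h2 e he
    rw [hord u u' hlt] at het
    exact hut het
  · -- counting condition → polychromatic
    intro hcond M hdiag hdisj hcard t
    obtain ⟨j, hj1, hjn, hjc⟩ := hcond t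
    by_contra hno
    push_neg at hno
    set cov : Finset (Fin n) := Finset.univ.filter (fun x => ∃ e ∈ M, x ∈ e) with hcov
    have hcard2 : ∀ e ∈ M, (Finset.univ.filter (fun x => x ∈ e)).card = 2 := by
      intro e he
      induction e using Sym2.ind with
      | _ x y =>
        have hxy : x ≠ y := by
          have := hdiag _ he
          rwa [Sym2.mk_isDiag_iff] at this
        have hset : Finset.univ.filter (fun z => z ∈ s(x, y)) = {x, y} := by
          ext z; simp [Sym2.mem_iff]
        rw [hset, Finset.card_insert_of_notMem (by simp [hxy]), Finset.card_singleton]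
    have hcovcard : cov.card = n - q := by
      have hbu : cov = M.biUnion (fun e => Finset.univ.filter (fun x => x ∈ e)) := by
        ext x; simp [hcov]
      rw [hbu, Finset.card_biUnion (by
        intro e he f hf hef
        rw [Function.onFun, Finset.disjoint_left]
        intro x hx hx'
        exact hdisj e he f hf hef x (by simpa using hx) (by simpa using hx'))]
      calc (∑ e ∈ M, (Finset.univ.filter (fun x => x ∈ e)).card)
          = ∑ e ∈ M, 2 := Finset.sum_congr rfl hcard2
        _ = 2 * M.card := by rw [Finset.sum_const, smul_eq_mul, mul_comm]
        _ = n - q := hcard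
    set A : Finset (Fin n) := Finset.univ.filter (fun i => i.val < j ∧ φ' i = t) with hA
    set B : Finset (Fin n) := Finset.univ.filter (fun i => i.val < j ∧ ¬ φ' i = t) with hB
    have hpart : ∀ x : Fin n, ∃ y : Fin n, x ∈ A ∩ cov → (y ∈ B ∧ s(y, x) ∈ M) := by
      intro x
      by_cases hx : x ∈ A ∩ cov
      · have hx1 : x.val < j ∧ φ' x = t := by
          have := (Finset.mem_inter.mp hx).1
          rw [hA, Finset.mem_filter] at this
          exact this.2
        have hx2 : ∃ e ∈ M, x ∈ e := by
          have := (Finset.mem_inter.mp hx).2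
          rw [hcov, Finset.mem_filter] at this
          exact this.2
        obtain ⟨e, heM, hxe⟩ := hx2
        set y := Sym2.Mem.other hxe with hy
        have hspec : s(x, y) = e := Sym2.other_spec hxe
        have hxy : x ≠ y := by
          intro h
          apply hdiag e heM
          rw [← hspec, ← h]
          exact Sym2.mk_isDiag_iff.mpr rfl
        have hylt : y < x := by
          rcases lt_or_gt_of_ne hxy with h | h
          · exfalso
            apply hno e heM
            rw [← hspec, hord x y h]
            exact hx1.2
          · exact h
        have hyM : s(y, x) ∈ M := by
          rw [Sym2.eq_swap, hspec]; exact heM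
        have hyt : ¬ φ' y = t := by
          intro h
          apply hno _ hyM
          rw [hord y x hylt]
          exact h
        refine ⟨y, fun _ => ⟨?_, hyM⟩⟩
        rw [hB, Finset.mem_filter]
        exact ⟨Finset.mem_univ _, lt_trans (Fin.lt_def.mp hylt) hx1.1, hyt⟩
      · exact ⟨x, fun h => absurd h hx⟩
    choose f hf using hpart
    have hmaps : ∀ x ∈ A ∩ cov, f x ∈ B := fun x hx => (hf x hx).1
    have hinj : Set.InjOn f ↑(A ∩ cov) := by
      intro x hx x' hx' hEq
      simp only [Finset.coe_inter, Set.mem_inter_iff, Finset.mem_coe] at hx hx'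
      have hx'' : x ∈ A ∩ cov := Finset.mem_inter.mpr ⟨hx.1, hx.2⟩
      have hx''' : x' ∈ A ∩ cov := Finset.mem_inter.mpr ⟨hx'.1, hx'.2⟩
      by_contra hne
      have h1 := (hf x hx'').2
      have h2 := (hf x' hx''').2
      by_cases hee : s(f x, x) = s(f x', x')
      · rw [Sym2.eq_iff] at hee
        rcases hee with ⟨_, h4⟩ | ⟨h4, h5⟩
        · exact hne h4
        · -- f x = x' : but x' ∈ A has color t while f x ∈ B does not
          have hBfx : f x ∈ B := hmaps x hx''
          rw [hB, Finset.mem_filter] at hBfx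
          have hAx' : x' ∈ A := hx'.1
          rw [hA, Finset.mem_filter] at hAx'
          exact hBfx.2.2 (h4 ▸ hAx'.2.2)
      · have hfxmem : f x ∈ s(f x, x) := by rw [Sym2.mem_iff]; left; rfl
        have hfxmem' : f x ∈ s(f x', x') := by rw [hEq, Sym2.mem_iff]; left; rfl
        exact hdisj _ h1 _ h2 hee (f x) hfxmem hfxmem'
    have hcardAB : (A ∩ cov).card ≤ B.card := Finset.card_le_card_of_injOn f hmaps hinj
    have hq_le : q ≤ n := by omega
    have hAsdiff : (A \ cov).card ≤ q := by
      have hsub : A \ cov ⊆ Finset.univ \ cov :=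
        Finset.sdiff_subset_sdiff (Finset.subset_univ A) (Finset.Subset.refl cov)
      have h2 : (Finset.univ \ cov).card = n - (n - q) := by
        rw [Finset.card_sdiff_of_subset (Finset.subset_univ cov), Finset.card_univ, Fintype.card_fin,
          hcovcard]
      have h3 := Finset.card_le_card hsub
      rw [h2] at h3
      omega
    have hAc : A.card ≤ (A ∩ cov).card + q := by
      have := Finset.card_inter_add_card_sdiff A cov
      omega
    have hABj : A.card + B.card = j := by
      have h1 := Finset.card_filter_add_card_filter_not
        (s := Finset.univ.filter (fun i : Fin n => i.val < j)) (p := fun i => φ' i = t)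
      rw [Finset.filter_filter, Finset.filter_filter, card_lt_filter j hjn] at h1
      exact h1
    omega
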